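/- Let T and T′ be trees and let θ: T → T′ be a locally surjective graph homomorphism. Then for every arc (u,v) of T, the half-tree T′_{(θ(u),θ(v))} is contained in the image under θ of the half-tree T_{(u,v)}: every vertex w′ of T′ with d(w′, θ(v)) < d(w′, θ(u)) equals θ(w) for some vertex w of T with d(w,v) < d(w,u). -/

import Mathlib

open SimpleGraph

variable {V V' : Type*}

/-- A graph homomorphism `θ : T →g T'` is locally surjective if for each vertex `v` of `T`,
every vertex of `T'` adjacent to `θ v` is the image of a vertex adjacent to `v`. -/
def LocallySurjective {T : SimpleGraph V} {T' : SimpleGraph V'} (θ : T →g T') : Prop :=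
  ∀ v : V, ∀ w' : V', T'.Adj (θ v) w' → ∃ w : V, T.Adj v w ∧ θ w = w'

/-- The arc `(u,v)` is backtracking for `θ` if some vertex `u' ≠ u` adjacent to `v`
has `θ u' = θ u`. -/
def Backtracking {T : SimpleGraph V} {T' : SimpleGraph V'} (θ : T →g T') (u v : V) : Prop :=
  T.Adj u v ∧ ∃ u' : V, u' ≠ u ∧ T.Adj u' v ∧ θ u' = θ u

/-- The arc `(u,v)` is pre-backtracking for `θ` if there is a backtracking arc `(u',v')`
whose half-tree `T_{(u',v')}` is contained in the half-tree `T_{(u,v)}`. -/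
def PreBacktracking {T : SimpleGraph V} {T' : SimpleGraph V'} (θ : T →g T') (u v : V) : Prop :=
  T.Adj u v ∧ ∃ u' v' : V, Backtracking θ u' v' ∧
    ∀ w : V, T.dist w v' < T.dist w u' → T.dist w v < T.dist w u

section Helpers
variable {W : Type*} {G : SimpleGraph W}

lemma split_le {a b t : W} (p : G.Walk a b) (ht : t ∈ p.support) :
    G.dist a t + G.dist t b ≤ p.length := by
  classical
  have h := p.take_spec ht
  have hlen : (p.takeUntil t ht).length + (p.dropUntil t ht).length = p.length := by
    rw [← SimpleGraph.Walk.length_append, h]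
  calc G.dist a t + G.dist t b ≤ (p.takeUntil t ht).length + (p.dropUntil t ht).length :=
        Nat.add_le_add (SimpleGraph.dist_le _) (SimpleGraph.dist_le _)
    _ = p.length := hlen

lemma tree_dist_adj (hT : G.IsTree) {u v : W} (h : G.Adj u v) (w : W) :
    G.dist w u = G.dist w v + 1 ∨ G.dist w v = G.dist w u + 1 := by
  have hc := hT.isConnected
  by_contra hcon
  push_neg at hcon
  obtain ⟨h1, h2⟩ := hcon
  have huv : G.dist u v = 1 := dist_eq_one_iff_adj.mpr h
  have hvu : G.dist v u = 1 := dist_eq_one_iff_adj.mpr h.symm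
  have t1 : G.dist w u ≤ G.dist w v + 1 := by
    calc G.dist w u ≤ G.dist w v + G.dist v u := hc.dist_triangle
      _ = G.dist w v + 1 := by rw [hvu]
  have t2 : G.dist w v ≤ G.dist w u + 1 := by
    calc G.dist w v ≤ G.dist w u + G.dist u v := hc.dist_triangle
      _ = G.dist w u + 1 := by rw [huv]
  have heq : G.dist w u = G.dist w v := by omega
  obtain ⟨p, hp, hpl⟩ := hc.exists_path_of_dist w v
  obtain ⟨q, hq, hql⟩ := hc.exists_path_of_dist w u
  have hv : v ∉ q.support := by
    intro hv
    have := split_le q hv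
    rw [hql, hvu, ← heq] at this
    omega
  have hQ : (q.concat h).IsPath := by
    rw [← SimpleGraph.Walk.isPath_reverse_iff, SimpleGraph.Walk.reverse_concat]
    exact hq.reverse.cons (by simpa using hv)
  have heqp := (hT.existsUnique_path w v).unique hQ hp
  have hl := congrArg SimpleGraph.Walk.length heqp
  rw [SimpleGraph.Walk.length_concat, hql, hpl, heq] at hl
  omega

lemma tree_cross (hT : G.IsTree) {u v x w : W} (huv : G.Adj u v) (hxw : G.Adj x w)
    (hx : G.dist x u = G.dist x v + 1) (hw : G.dist w v = G.dist w u + 1) :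
    x = v ∧ w = u := by
  have hc := hT.isConnected
  have hxw1 : G.dist x w = 1 := dist_eq_one_iff_adj.mpr hxw
  have hwx1 : G.dist w x = 1 := dist_eq_one_iff_adj.mpr hxw.symm
  have t1 : G.dist x u ≤ G.dist x w + G.dist w u := hc.dist_triangle
  have t2 : G.dist w v ≤ G.dist w x + G.dist x v := hc.dist_triangle
  rw [hxw1] at t1
  rw [hwx1] at t2
  have hk : G.dist w u = G.dist x v := by omega
  rcases Nat.eq_zero_or_pos (G.dist x v) with h0 | hpos
  · refine ⟨hc.dist_eq_zero_iff.mp h0, hc.dist_eq_zero_iff.mp (hk.trans h0)⟩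
  · exfalso
    obtain ⟨p, hp, hpl⟩ := hc.exists_path_of_dist x v
    obtain ⟨q, hq, hql⟩ := hc.exists_path_of_dist w u
    rw [hk] at hql
    have hu : u ∉ p.support := by
      intro hu
      have := split_le p hu
      rw [hpl] at this
      have : G.dist x u ≤ G.dist x v := le_trans (Nat.le_add_right _ _) this
      omega
    have hQ2 : (p.concat huv.symm).IsPath := by
      rw [← SimpleGraph.Walk.isPath_reverse_iff, SimpleGraph.Walk.reverse_concat]
      exact hp.reverse.cons (by simpa using hu)
    have hxq : x ∉ q.support := by
      intro hx'
      have := split_le q hx'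
      rw [hql, hwx1, hx] at this
      omega
    have hQ1 : (SimpleGraph.Walk.cons hxw q).IsPath := hq.cons hxq
    have heq := (hT.existsUnique_path x u).unique hQ1 hQ2
    have hwmem : w ∈ (p.concat huv.symm).support := by
      rw [← heq]; simp
    rw [SimpleGraph.Walk.support_concat, List.mem_append] at hwmem
    rcases hwmem with hmem | hwu
    on_goal 2 => simp only [List.mem_singleton] at hwu
    · have := split_le p hmem
      rw [hpl, hxw1, hw, hk] at this
      omega
    · rw [hwu] at hk
      rw [SimpleGraph.dist_self] at hk
      omega

end Helpers

/-- Lemma: if `θ : T → T'` is a locally surjective homomorphism of trees and `(u,v)` is an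
arc of `T`, then the half-tree `T'_{(θ u, θ v)}` is contained in `θ(T_{(u,v)})`. -/


theorem halfTree_subset_image_halfTree
    (T : SimpleGraph V) (T' : SimpleGraph V') (hT : T.IsTree) (hT' : T'.IsTree)
    (θ : T →g T') (hls : LocallySurjective θ)
    (u v : V) (hadj : T.Adj u v) :
    ∀ w' : V', T'.dist w' (θ v) < T'.dist w' (θ u) →
      ∃ w : V, T.dist w v < T.dist w u ∧ θ w = w' := by
  have hc := hT.isConnected
  have hc' := hT'.isConnected
  have hadj' : T'.Adj (θ u) (θ v) := θ.map_adj hadj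
  suffices H : ∀ n : ℕ, ∀ w' : V', T'.dist w' (θ v) = n →
      T'.dist w' (θ v) < T'.dist w' (θ u) → ∃ w : V, T.dist w v < T.dist w u ∧ θ w = w' by
    intro w' hlt
    exact H _ w' rfl hlt
  intro n
  induction n using Nat.strong_induction_on with
  | _ n IH =>
    intro w' hdn hlt
    match n, hdn with
    | 0, hdn =>
      have hwv : w' = θ v := hc'.dist_eq_zero_iff.mp hdn
      refine ⟨v, ?_, hwv.symm⟩
      rw [SimpleGraph.dist_self, dist_eq_one_iff_adj.mpr hadj.symm]
      omega
    | (n+1), hdn =>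
      have hdu : T'.dist w' (θ u) = n + 2 := by
        rcases tree_dist_adj hT' hadj' w' with h | h
        · omega
        · omega
      obtain ⟨p, hp, hpl⟩ := hc'.exists_path_of_dist w' (θ v)
      cases p with
      | nil => rw [SimpleGraph.dist_self] at hdn; omega
      | @cons _ x' _ hwx q =>
        rw [SimpleGraph.Walk.length_cons, hdn] at hpl
        have hqd : T'.dist x' (θ v) = n := by
          have h1 : T'.dist x' (θ v) ≤ n := by
            have := SimpleGraph.dist_le q
            omega
          have h2 : T'.dist w' (θ v) ≤ T'.dist w' x' + T'.dist x' (θ v) := hc'.dist_triangle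
          rw [hdn, dist_eq_one_iff_adj.mpr hwx] at h2
          omega
        have hqu : T'.dist x' (θ v) < T'.dist x' (θ u) := by
          have h2 : T'.dist w' (θ u) ≤ T'.dist w' x' + T'.dist x' (θ u) := hc'.dist_triangle
          rw [hdu, dist_eq_one_iff_adj.mpr hwx] at h2
          omega
        obtain ⟨x, hxlt, hxim⟩ := IH n (Nat.lt_succ_self n) x' hqd hqu
        have hadjθ : T'.Adj (θ x) w' := by rw [hxim]; exact hwx.symm
        obtain ⟨w, hxw, hwim⟩ := hls x w' hadjθ
        have hxside : T.dist x u = T.dist x v + 1 := by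
          rcases tree_dist_adj hT hadj x with h | h
          · exact h
          · omega
        rcases tree_dist_adj hT hadj w with h | h
        · exact ⟨w, by omega, hwim⟩
        · exfalso
          obtain ⟨_, hweq⟩ := tree_cross hT hadj hxw hxside h
          rw [hweq] at hwim
          rw [← hwim, SimpleGraph.dist_self] at hdu
          omega
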